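/- Let X₁, X₂, … be independent and identically distributed nonnegative real-valued random variables with finite mean μ := E[X₁], and let c₁ < μ be a real number. Then there exists a constant c₂ > 0 such that for every integer n ≥ 1, P(X₁ + X₂ + ⋯ + Xₙ ≤ c₁·n) ≤ exp(−c₂·n). -/

import Mathlib

open MeasureTheory ProbabilityTheory Filter Real

/-- Pointwise bound: for `t ≥ 0`, `M > 0`, `x ≥ 0`,
`exp (-(t*x)) ≤ 1 - (1 - exp (-(t*M))) / M * min x M`. -/
lemma aux_exp_neg_mul_le {t M x : ℝ} (ht : 0 ≤ t) (hM : 0 < M) (hx : 0 ≤ x) :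
    Real.exp (-(t * x)) ≤ 1 - (1 - Real.exp (-(t * M))) / M * min x M := by
  rcases le_or_gt x M with h | h
  · rw [min_eq_left h]
    have h2 : 0 ≤ x / M := div_nonneg hx hM.le
    have h1 : 0 ≤ 1 - x / M := by
      rw [sub_nonneg]
      exact div_le_one_of_le₀ h hM.le
    have hconv := convexOn_exp.2 (Set.mem_univ (0 : ℝ)) (Set.mem_univ (-(t * M)))
      h1 h2 (by ring)
    have harg : (1 - x / M) • (0 : ℝ) + (x / M) • (-(t * M)) = -(t * x) := by
      field_simp
      simp only [smul_eq_mul, mul_zero, zero_add]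
      rw [div_mul_eq_mul_div, div_eq_iff hM.ne']
      ring
    rw [harg] at hconv
    calc Real.exp (-(t * x)) ≤ (1 - x / M) • Real.exp 0 + (x / M) • Real.exp (-(t * M)) := hconv
      _ = 1 - (1 - Real.exp (-(t * M))) / M * x := by
          simp only [smul_eq_mul, Real.exp_zero]
          field_simp
          ring
  · rw [min_eq_right h.le]
    have hle : Real.exp (-(t * x)) ≤ Real.exp (-(t * M)) := by
      apply Real.exp_le_exp.2
      have : t * M ≤ t * x := mul_le_mul_of_nonneg_left h.le ht
      linarith
    calc Real.exp (-(t * x)) ≤ Real.exp (-(t * M)) := hle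
      _ = 1 - (1 - Real.exp (-(t * M))) / M * M := by
          field_simp
          ring

set_option maxHeartbeats 1000000 in
/-- Large deviation lower-tail bound for i.i.d. nonnegative integrable random variables:
if `c₁ < μ = E[X₁]`, then there is `c₂ > 0` with
`P(X₁ + ⋯ + Xₙ ≤ c₁ n) ≤ exp (−c₂ n)` for all `n ≥ 1`. -/
theorem iid_lower_tail_exponential_bound
    {Ω : Type*} {mΩ : MeasurableSpace Ω} (P : Measure Ω) [IsProbabilityMeasure P]
    (X : ℕ → Ω → ℝ)
    (hmeas : ∀ i, Measurable (X i))
    (hindep : iIndepFun X P)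
    (hident : ∀ i, IdentDistrib (X i) (X 0) P P)
    (hnonneg : ∀ i ω, 0 ≤ X i ω)
    (hint : Integrable (X 0) P)
    (c₁ : ℝ) (hc₁ : c₁ < ∫ ω, X 0 ω ∂P) :
    ∃ c₂ : ℝ, 0 < c₂ ∧ ∀ n : ℕ, 1 ≤ n →
      P {ω | ∑ i ∈ Finset.range n, X i ω ≤ c₁ * n} ≤
        ENNReal.ofReal (Real.exp (-c₂ * n)) := by
  -- Step 1: choose a truncation level M (a positive natural) with ∫ min (X 0) M > c₁.
  have hmin_int : ∀ i : ℕ, ∀ r : ℝ, 0 ≤ r → Integrable (fun ω => min (X i ω) r) P := by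
    intro i r hr
    refine (((hident i).integrable_iff).2 hint).mono
      ((hmeas i).min measurable_const).aestronglyMeasurable ?_
    filter_upwards with ω
    rw [Real.norm_eq_abs, Real.norm_eq_abs, abs_of_nonneg (le_min (hnonneg i ω) hr),
      abs_of_nonneg (hnonneg i ω)]
    exact min_le_left _ _
  have htendsto : Tendsto (fun m : ℕ => ∫ ω, min (X 0 ω) (m : ℝ) ∂P) atTop
      (nhds (∫ ω, X 0 ω ∂P)) := by
    refine integral_tendsto_of_tendsto_of_monotone
      (fun m => hmin_int 0 m (Nat.cast_nonneg m)) hint ?_ ?_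
    · filter_upwards with ω a b hab
      exact min_le_min le_rfl (Nat.cast_le.2 hab)
    · filter_upwards with ω
      refine tendsto_const_nhds.congr' ?_
      filter_upwards [eventually_ge_atTop (Nat.ceil (X 0 ω))] with m hm
      exact (min_eq_left (Nat.ceil_le.1 hm)).symm
  obtain ⟨m, hm1, hma⟩ : ∃ m : ℕ, 1 ≤ m ∧ c₁ < ∫ ω, min (X 0 ω) (m : ℝ) ∂P := by
    obtain ⟨m, hm1, hm2⟩ :=
      ((eventually_ge_atTop 1).and (htendsto.eventually (lt_mem_nhds hc₁))).exists
    exact ⟨m, hm1, hm2⟩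
  set M : ℝ := (m : ℝ) with hMdef
  have hM : 0 < M := by
    have : (1 : ℝ) ≤ M := by rw [hMdef]; exact_mod_cast hm1
    linarith
  set a : ℝ := ∫ ω, min (X 0 ω) M ∂P with hadef
  have ha_nonneg : 0 ≤ a :=
    integral_nonneg fun ω => le_min (hnonneg 0 ω) hM.le
  have hac : c₁ < a := hma
  set t : ℝ := (a - c₁) / (2 * M * (a + 1)) with htdef
  have ht : 0 < t := by
    apply div_pos (by linarith)
    positivity
  -- key: (a + c₁)/2 ≤ a * exp (-(t*M))
  have hkey : (a + c₁) / 2 ≤ a * Real.exp (-(t * M)) := by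
    have h1 : 1 - t * M ≤ Real.exp (-(t * M)) := by
      have := Real.add_one_le_exp (-(t * M)); linarith
    have h2 : a * (1 - t * M) ≤ a * Real.exp (-(t * M)) :=
      mul_le_mul_of_nonneg_left h1 ha_nonneg
    have htM : t * M = (a - c₁) / (2 * (a + 1)) := by
      rw [htdef]
      field_simp
    have h3 : t * M * a ≤ (a - c₁) / 2 := by
      rw [htM, div_mul_eq_mul_div, div_le_div_iff₀ (by positivity) two_pos]
      nlinarith
    nlinarith
  -- each mgf at -t is at most exp (-(t * (a + c₁) / 2))
  have hC : t * ((a + c₁) / 2) ≤ (1 - Real.exp (-(t * M))) / M * a := by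
    have hexp : t * M * Real.exp (-(t * M)) ≤ 1 - Real.exp (-(t * M)) := by
      have h1 : t * M + 1 ≤ Real.exp (t * M) := Real.add_one_le_exp (t * M)
      have h2 : 0 < Real.exp (-(t * M)) := Real.exp_pos _
      have h3 : (t * M + 1) * Real.exp (-(t * M)) ≤ Real.exp (t * M) * Real.exp (-(t * M)) :=
        mul_le_mul_of_nonneg_right h1 h2.le
      rw [← Real.exp_add] at h3
      simp only [add_neg_cancel, Real.exp_zero] at h3
      linarith
    have h4 : t * M * Real.exp (-(t * M)) * a ≤ (1 - Real.exp (-(t * M))) * a :=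
      mul_le_mul_of_nonneg_right hexp ha_nonneg
    have h5 : t * ((a + c₁) / 2) ≤ t * (a * Real.exp (-(t * M))) :=
      mul_le_mul_of_nonneg_left hkey ht.le
    have h6 : t * ((a + c₁) / 2) * M ≤ (1 - Real.exp (-(t * M))) * a := by
      nlinarith [mul_le_mul_of_nonneg_right h5 hM.le]
    calc t * ((a + c₁) / 2) = t * ((a + c₁) / 2) * M / M := by field_simp
      _ ≤ (1 - Real.exp (-(t * M))) * a / M := by gcongr
      _ = (1 - Real.exp (-(t * M))) / M * a := by ring
  have hmgf_le : ∀ i, mgf (X i) P (-t) ≤ Real.exp (-(t * ((a + c₁) / 2))) := by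
    intro i
    have hint_min : ∫ ω, min (X i ω) M ∂P = a := by
      have h := ((hident i).comp (u := fun x : ℝ => min x M)
        (measurable_id.min measurable_const)).integral_eq
      simpa [Function.comp] using h
    have hintexp : Integrable (fun ω => Real.exp (-t * X i ω)) P := by
      refine Integrable.mono' (integrable_const 1)
        (((hmeas i).const_mul (-t)).exp.aestronglyMeasurable) ?_
      filter_upwards with ω
      rw [Real.norm_eq_abs, abs_of_pos (Real.exp_pos _), Real.exp_le_one_iff]
      have := mul_nonneg ht.le (hnonneg i ω)
      linarith
    have h1 : mgf (X i) P (-t) ≤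
        ∫ ω, (1 - (1 - Real.exp (-(t * M))) / M * min (X i ω) M) ∂P := by
      rw [mgf]
      refine integral_mono hintexp ?_ ?_
      · exact (integrable_const 1).sub (((hmin_int i M hM.le)).const_mul _)
      · intro ω
        have := aux_exp_neg_mul_le ht.le hM (hnonneg i ω)
        simpa [neg_mul] using this
    have h2 : ∫ ω, (1 - (1 - Real.exp (-(t * M))) / M * min (X i ω) M) ∂P
        = 1 - (1 - Real.exp (-(t * M))) / M * a := by
      rw [integral_sub (integrable_const 1) ((hmin_int i M hM.le).const_mul _),
        integral_const_mul, hint_min]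
      simp
    have h3 : 1 - (1 - Real.exp (-(t * M))) / M * a ≤ 1 - t * ((a + c₁) / 2) := by
      linarith
    have h4 : 1 - t * ((a + c₁) / 2) ≤ Real.exp (-(t * ((a + c₁) / 2))) := by
      have := Real.add_one_le_exp (-(t * ((a + c₁) / 2))); linarith
    calc mgf (X i) P (-t) ≤ _ := h1
      _ = _ := h2
      _ ≤ _ := h3
      _ ≤ _ := h4
  -- conclude
  refine ⟨t * (a - c₁) / 2, div_pos (mul_pos ht (by linarith)) two_pos, fun n hn => ?_⟩
  set S : Ω → ℝ := fun ω => ∑ i ∈ Finset.range n, X i ω with hSdef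
  have hSmeas : Measurable S := Finset.measurable_sum _ fun i _ => hmeas i
  have hintSn : Integrable (fun ω => Real.exp (-t * S ω)) P := by
    refine Integrable.mono' (integrable_const 1)
      ((hSmeas.const_mul (-t)).exp.aestronglyMeasurable) ?_
    filter_upwards with ω
    rw [Real.norm_eq_abs, abs_of_pos (Real.exp_pos _), Real.exp_le_one_iff]
    have hsum : 0 ≤ S ω := Finset.sum_nonneg fun i _ => hnonneg i ω
    have := mul_nonneg ht.le hsum
    linarith
  have hchern := measure_le_le_exp_mul_mgf (μ := P) (X := S)
    (c₁ * n) (neg_nonpos.2 ht.le) hintSn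
  have hmgfS : mgf S P (-t) = ∏ i ∈ Finset.range n, mgf (X i) P (-t) := by
    have hSsum : S = ∑ i ∈ Finset.range n, X i := by
      ext ω; rw [hSdef, Finset.sum_apply]
    rw [hSsum]
    exact hindep.mgf_sum hmeas _
  rw [hmgfS] at hchern
  have hprod : ∏ i ∈ Finset.range n, mgf (X i) P (-t)
      ≤ (Real.exp (-(t * ((a + c₁) / 2)))) ^ n := by
    calc ∏ i ∈ Finset.range n, mgf (X i) P (-t)
        ≤ ∏ _i ∈ Finset.range n, Real.exp (-(t * ((a + c₁) / 2))) :=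
          Finset.prod_le_prod (fun i _ => mgf_nonneg) (fun i _ => hmgf_le i)
      _ = (Real.exp (-(t * ((a + c₁) / 2)))) ^ n := by
          rw [Finset.prod_const, Finset.card_range]
  have hfinal : (P {ω | S ω ≤ c₁ * n}).toReal
      ≤ Real.exp (-(t * (a - c₁) / 2) * n) := by
    refine hchern.trans ?_
    have hmul : Real.exp (- -t * (c₁ * n)) * (Real.exp (-(t * ((a + c₁) / 2)))) ^ n
        = Real.exp (-(t * (a - c₁) / 2) * n) := by
      rw [← Real.exp_nat_mul, ← Real.exp_add]
      congr 1
      push_cast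
      ring
    calc Real.exp (- -t * (c₁ * n)) * ∏ i ∈ Finset.range n, mgf (X i) P (-t)
        ≤ Real.exp (- -t * (c₁ * n)) * (Real.exp (-(t * ((a + c₁) / 2)))) ^ n := by
          exact mul_le_mul_of_nonneg_left hprod (Real.exp_nonneg _)
      _ = Real.exp (-(t * (a - c₁) / 2) * n) := hmul
  rw [ENNReal.le_ofReal_iff_toReal_le (measure_ne_top P _) (Real.exp_nonneg _)]
  exact hfinal
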